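/- Let k ≥ 1, let n₁,…,n_k be positive integers, and let d ∈ (0,1). For a permutation σ of {1,…,k}, set a_i(σ) = n_{σ(i)} + n_{σ(i+1)} + ⋯ + n_{σ(k)}. Then ∑_{σ ∈ S_k} ∏_{i=1}^{k} 1/( a_i(σ) − (k−i+1)d ) = 1 / ∏_{i=1}^{k} (n_i − d), where S_k denotes the set of all k! permutations of {1,…,k}. -/
import Mathlib


open MeasureTheory Finset

/-- Rising factorial `(x)_{(n)} = ∏_{j=0}^{n-1} (x+j)`. -/
noncomputable def risingFactorial (x : ℝ) (n : ℕ) : ℝ := ∏ j ∈ Finset.range n, (x + j)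

/-- Beta function `B(a,b) = Γ(a)Γ(b)/Γ(a+b)`. -/
noncomputable def betaFn (a b : ℝ) : ℝ := Real.Gamma a * Real.Gamma b / Real.Gamma (a + b)

/-- The partition of `{1,…,n}` induced by an allocation vector `z ∈ (ℕ₊)ⁿ`:
its blocks are the nonempty level sets `{i : z_i = j}`. -/
def Cz {n : ℕ} (z : Fin n → ℕ+) : Finset (Finset (Fin n)) :=
  Finset.image (fun i => Finset.univ.filter fun i' => z i' = z i) Finset.univ

/-- `m(z) = max {z₁,…,zₙ}`. -/
def mz {n : ℕ} (z : Fin n → ℕ+) : ℕ := Finset.univ.sup fun i => (z i : ℕ)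

/-- `g_j(z) = #{i : z_i ≥ j}`. -/
def gz {n : ℕ} (z : Fin n → ℕ+) (j : ℕ) : ℕ :=
  (Finset.univ.filter fun i => j ≤ (z i : ℕ)).card

/-- Access the `j`-th coordinate (1-indexed) of a vector `v : Fin m → ℝ`. -/
noncomputable def stk {m : ℕ} (v : Fin m → ℝ) (j : ℕ) : ℝ :=
  if h : j - 1 < m then v ⟨j - 1, h⟩ else 0

/-- `C` is a partition of `{1,…,n}`: all blocks are nonempty and every element
belongs to exactly one block. -/
def IsPartition {n : ℕ} (C : Finset (Finset (Fin n))) : Prop :=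
  (∀ c ∈ C, c.Nonempty) ∧ ∀ i : Fin n, ∃! c, c ∈ C ∧ i ∈ c

set_option linter.unusedVariables false in
private lemma _aux : True := trivial

lemma Ici_succ_map (k : ℕ) (j : Fin k) :
    Finset.Ici j.succ = (Finset.Ici j).map ⟨Fin.succ, Fin.succ_injective k⟩ := by
  ext i
  simp only [Finset.mem_Ici, Finset.mem_map, Function.Embedding.coeFn_mk]
  constructor
  · intro h
    have hi : i ≠ 0 := by
      rintro rfl
      simp [Fin.le_def] at h
    refine ⟨i.pred hi, ?_, Fin.succ_pred _ _⟩
    rwa [← Fin.succ_le_succ_iff, Fin.succ_pred]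
  · rintro ⟨a, ha, rfl⟩; exact Fin.succ_le_succ_iff.mpr ha

lemma key (k : ℕ) : ∀ (x : Fin k → ℝ), (∀ i, 0 < x i) →
    ∑ σ : Equiv.Perm (Fin k), ∏ i, (∑ l ∈ Finset.Ici i, x (σ l))⁻¹ = (∏ i, x i)⁻¹ := by
  induction k with
  | zero => intro x hx; simp
  | succ k ih =>
    intro x hx
    have hS : (0:ℝ) < ∑ i, x i := Finset.sum_pos (fun i _ => hx i) ⟨0, Finset.mem_univ 0⟩
    have hP : (0:ℝ) < ∏ i, x i := Finset.prod_pos (fun i _ => hx i)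
    rw [← Equiv.sum_comp Equiv.Perm.decomposeFin.symm, Fintype.sum_prod_type]
    have key1 : ∀ (p : Fin (k+1)) (e : Equiv.Perm (Fin k)),
        ∏ i : Fin (k+1), (∑ l ∈ Finset.Ici i, x (Equiv.Perm.decomposeFin.symm (p, e) l))⁻¹
        = (∑ i, x i)⁻¹ * ∏ i : Fin k, (∑ l ∈ Finset.Ici i, x (Equiv.swap 0 p (e l).succ))⁻¹ := by
      intro p e
      rw [Fin.prod_univ_succ]
      congr 1
      · congr 1
        have h0 : Finset.Ici (0 : Fin (k+1)) = Finset.univ := by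
          ext i; simp [Fin.zero_le]
        rw [h0]
        exact Equiv.sum_comp _ x
      · apply Finset.prod_congr rfl
        intro i _
        congr 1
        rw [Ici_succ_map, Finset.sum_map]
        apply Finset.sum_congr rfl
        intro l _
        simp [Equiv.Perm.decomposeFin_symm_apply_succ]
    have hprod : ∀ p : Fin (k+1),
        x p * ∏ t : Fin k, x (Equiv.swap 0 p t.succ) = ∏ i, x i := by
      intro p
      have h := Equiv.prod_comp (Equiv.swap 0 p) x
      rw [Fin.prod_univ_succ] at h
      simpa using h
    have step : ∀ p : Fin (k+1),
        (∑ e : Equiv.Perm (Fin k),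
          ∏ i : Fin (k+1), (∑ l ∈ Finset.Ici i, x (Equiv.Perm.decomposeFin.symm (p, e) l))⁻¹)
        = (∑ i, x i)⁻¹ * (x p * (∏ i, x i)⁻¹) := by
      intro p
      have hy : ∀ t : Fin k, 0 < x (Equiv.swap 0 p t.succ) := fun t => hx _
      calc (∑ e : Equiv.Perm (Fin k),
          ∏ i : Fin (k+1), (∑ l ∈ Finset.Ici i, x (Equiv.Perm.decomposeFin.symm (p, e) l))⁻¹)
          = ∑ e : Equiv.Perm (Fin k), (∑ i, x i)⁻¹ *
              ∏ i : Fin k, (∑ l ∈ Finset.Ici i, x (Equiv.swap 0 p (e l).succ))⁻¹ := by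
            exact Finset.sum_congr rfl fun e _ => key1 p e
        _ = (∑ i, x i)⁻¹ * ∑ e : Equiv.Perm (Fin k),
              ∏ i : Fin k, (∑ l ∈ Finset.Ici i, x (Equiv.swap 0 p (e l).succ))⁻¹ := by
            rw [Finset.mul_sum]
        _ = (∑ i, x i)⁻¹ * (∏ t : Fin k, x (Equiv.swap 0 p t.succ))⁻¹ := by
            rw [ih _ hy]
        _ = (∑ i, x i)⁻¹ * (x p * (∏ i, x i)⁻¹) := by
            congr 1
            have hxp : x p ≠ 0 := (hx p).ne'
            have hY : (0:ℝ) < ∏ t : Fin k, x (Equiv.swap 0 p t.succ) :=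
              Finset.prod_pos fun t _ => hy t
            rw [← hprod p, mul_inv, ← mul_assoc, mul_inv_cancel₀ hxp, one_mul]
    calc (∑ p : Fin (k+1), ∑ e : Equiv.Perm (Fin k),
          ∏ i : Fin (k+1), (∑ l ∈ Finset.Ici i, x (Equiv.Perm.decomposeFin.symm (p, e) l))⁻¹)
        = ∑ p : Fin (k+1), (∑ i, x i)⁻¹ * (x p * (∏ i, x i)⁻¹) :=
          Finset.sum_congr rfl fun p _ => step p
      _ = (∏ i, x i)⁻¹ := by
          rw [← Finset.mul_sum]
          rw [show (∑ p : Fin (k+1), x p * (∏ i, x i)⁻¹) = (∑ p, x p) * (∏ i, x i)⁻¹ by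
            rw [Finset.sum_mul]]
          field_simp

/-- For positive integers `n₁,…,n_k` and `d ∈ (0,1)`, with
`a_i(σ) = n_{σ(i)} + ⋯ + n_{σ(k)}`,
`∑_{σ ∈ S_k} ∏_{i=1}^k 1/(a_i(σ) - (k-i+1)d) = 1/∏_{i=1}^k (n_i - d)`.
(Here `i : Fin k` is 0-indexed, representing position `i+1`, so `k-i+1` becomes `k - i`.) -/
theorem urn_sum_reciprocal {k : ℕ} (hk : 1 ≤ k) (m : Fin k → ℕ+) (d : ℝ)
    (hd : d ∈ Set.Ioo (0 : ℝ) 1) :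
    ∑ σ : Equiv.Perm (Fin k), ∏ i : Fin k,
        1 / ((∑ l ∈ Finset.Ici i, ((m (σ l) : ℕ) : ℝ)) - ((k : ℝ) - (i : ℕ)) * d)
      = 1 / ∏ i : Fin k, (((m i : ℕ) : ℝ) - d) := by
  obtain ⟨hd0, hd1⟩ := hd
  have hx : ∀ i : Fin k, 0 < ((m i : ℕ) : ℝ) - d := by
    intro i
    have h1 : (1:ℝ) ≤ ((m i : ℕ) : ℝ) := by exact_mod_cast (m i).one_le
    linarith
  have h := key k (fun i => ((m i : ℕ) : ℝ) - d) hx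
  simp only [one_div]
  rw [← h]
  refine Finset.sum_congr rfl fun σ _ => Finset.prod_congr rfl fun i _ => ?_
  congr 1
  rw [Finset.sum_sub_distrib, Finset.sum_const, nsmul_eq_mul, Fin.card_Ici]
  have hc : ((k - (i:ℕ) : ℕ) : ℝ) = (k:ℝ) - (i:ℕ) := by
    have := i.isLt.le
    push_cast [Nat.cast_sub this]
    ring
  rw [hc]
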